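/- Let φ be a conformal immersion on an open set U ⊆ ℝ² with conformal factor λ, with unit normal n := (φ_u × φ_v)/‖φ_u × φ_v‖, mean curvature H := ⟨Δφ, n⟩/(2λ²), and μ := (∂_z φ_z, n). Then the Weingarten (third structure) equation holds at every point of U: ∂_z n = −H φ_z − (2μ/λ²) φ_z̄. -/

import Mathlib

open Complex

noncomputable section

/-- Euclidean 3-space. -/
abbrev E3 : Type := EuclideanSpace ℝ (Fin 3)

/-- Partial derivative in the first (u) coordinate direction. -/
def pu {F : Type} [NormedAddCommGroup F] [NormedSpace ℝ F]
    (f : ℝ × ℝ → F) (p : ℝ × ℝ) : F := fderiv ℝ f p (1, 0)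

/-- Partial derivative in the second (v) coordinate direction. -/
def pv {F : Type} [NormedAddCommGroup F] [NormedSpace ℝ F]
    (f : ℝ × ℝ → F) (p : ℝ × ℝ) : F := fderiv ℝ f p (0, 1)

/-- Cross product on ℝ³. -/
def cross (a b : E3) : E3 :=
  (WithLp.equiv 2 (Fin 3 → ℝ)).symm
    ![a 1 * b 2 - a 2 * b 1, a 2 * b 0 - a 0 * b 2, a 0 * b 1 - a 1 * b 0]

/-- The Euclidean inner product on ℝ³. -/
def ip (a b : E3) : ℝ := @inner ℝ _ _ a b

/-- `φ` is a smooth conformal immersion on the open set `U ⊆ ℝ²` with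
(smooth, positive) conformal factor `lam`:  ⟨φ_u,φ_u⟩ = λ², ⟨φ_v,φ_v⟩ = λ²,
⟨φ_u,φ_v⟩ = 0 at every point of `U`. -/
def IsConfImm (U : Set (ℝ × ℝ)) (φ : ℝ × ℝ → E3) (lam : ℝ × ℝ → ℝ) : Prop :=
  IsOpen U ∧ ContDiffOn ℝ (⊤ : ℕ∞) φ U ∧ ContDiffOn ℝ (⊤ : ℕ∞) lam U ∧
    ∀ p ∈ U, 0 < lam p ∧
      ip (pu φ p) (pu φ p) = (lam p) ^ 2 ∧
      ip (pv φ p) (pv φ p) = (lam p) ^ 2 ∧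
      ip (pu φ p) (pv φ p) = 0

/-- Complexification ℝ³ ↪ ℂ³. -/
def toC (x : E3) : Fin 3 → ℂ := fun j => (x j : ℂ)

/-- Complex-bilinear dot product on ℂ³:  (a,b) = Σⱼ aⱼ bⱼ. -/
def cdot (a b : Fin 3 → ℂ) : ℂ := ∑ j, a j * b j

/-- ∂_z = ½(∂_u − i ∂_v) for maps into complex normed spaces. -/
def dz {F : Type} [NormedAddCommGroup F] [NormedSpace ℂ F]
    (f : ℝ × ℝ → F) (p : ℝ × ℝ) : F :=
  (2 : ℂ)⁻¹ • (pu f p - Complex.I • pv f p)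

/-- ∂_z̄ = ½(∂_u + i ∂_v) for maps into complex normed spaces. -/
def dzbar {F : Type} [NormedAddCommGroup F] [NormedSpace ℂ F]
    (f : ℝ × ℝ → F) (p : ℝ × ℝ) : F :=
  (2 : ℂ)⁻¹ • (pu f p + Complex.I • pv f p)

/-- `f_z := ½(f_u − i f_v) ∈ ℂ³` for a real-vector-valued map `f` (in particular `φ_z`). -/
def phiz (f : ℝ × ℝ → E3) (p : ℝ × ℝ) : Fin 3 → ℂ :=
  (2 : ℂ)⁻¹ • (toC (pu f p) - Complex.I • toC (pv f p))

/-- `f_z̄ := ½(f_u + i f_v) ∈ ℂ³` for a real-vector-valued map `f` (in particular `φ_z̄`). -/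
def phizbar (f : ℝ × ℝ → E3) (p : ℝ × ℝ) : Fin 3 → ℂ :=
  (2 : ℂ)⁻¹ • (toC (pu f p) + Complex.I • toC (pv f p))

/-- The unit normal n = (φ_u × φ_v)/‖φ_u × φ_v‖. -/
def nvec (φ : ℝ × ℝ → E3) (p : ℝ × ℝ) : E3 :=
  ‖cross (pu φ p) (pv φ p)‖⁻¹ • cross (pu φ p) (pv φ p)

/-- Componentwise Laplacian Δ = ∂_uu + ∂_vv. -/
def lap {F : Type} [NormedAddCommGroup F] [NormedSpace ℝ F]
    (f : ℝ × ℝ → F) (p : ℝ × ℝ) : F := pu (pu f) p + pv (pv f) p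

/-- Mean curvature H = ⟨Δφ, n⟩/(2λ²). -/
def mcurv (φ : ℝ × ℝ → E3) (lam : ℝ × ℝ → ℝ) (p : ℝ × ℝ) : ℝ :=
  ip (lap φ p) (nvec φ p) / (2 * (lam p) ^ 2)

/-- μ := (∂_z φ_z, n). -/
def muQ (φ : ℝ × ℝ → E3) (p : ℝ × ℝ) : ℂ :=
  cdot (dz (phiz φ) p) (toC (nvec φ p))


/-! ### Auxiliary lemmas -/

section Aux

lemma ip_eq' (a b : E3) : ip a b = a 0 * b 0 + a 1 * b 1 + a 2 * b 2 := by
  simp [ip, PiLp.inner_apply, Fin.sum_univ_three]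
  ring

lemma cross_zero' (a b : E3) : cross a b 0 = a 1 * b 2 - a 2 * b 1 := rfl
lemma cross_one' (a b : E3) : cross a b 1 = a 2 * b 0 - a 0 * b 2 := rfl
lemma cross_two' (a b : E3) : cross a b 2 = a 0 * b 1 - a 1 * b 0 := rfl

lemma norm_sq_eq_ip (x : E3) : ‖x‖ ^ 2 = ip x x := by
  rw [ip, real_inner_self_eq_norm_sq]

lemma cross_norm_sq (a b : E3) :
    ‖cross a b‖ ^ 2 = ip a a * ip b b - ip a b ^ 2 := by
  rw [norm_sq_eq_ip]
  simp only [ip_eq', cross_zero', cross_one', cross_two']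
  ring

lemma ip_cross_left (a b : E3) : ip (cross a b) a = 0 := by
  simp only [ip_eq', cross_zero', cross_one', cross_two']; ring

lemma ip_cross_right (a b : E3) : ip (cross a b) b = 0 := by
  simp only [ip_eq', cross_zero', cross_one', cross_two']; ring

/-- Expansion of a vector in an orthogonal-ish frame. -/
lemma expand_vec (a b y : E3) :
    (ip a a * ip b b - ip a b ^ 2) • y
      = (ip y a) • ((ip b b) • a - (ip a b) • b)
        + (ip y b) • ((ip a a) • b - (ip a b) • a)
        + (ip y (cross a b)) • (cross a b) := by
  ext j
  fin_cases j <;>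
    · simp [ip_eq', cross, PiLp.smul_apply, WithLp.equiv_symm_apply]
      ring

variable {F : Type} [NormedAddCommGroup F] [NormedSpace ℝ F]

lemma contDiffOn_pu' {f : ℝ × ℝ → F} {U : Set (ℝ × ℝ)} (hU : IsOpen U)
    (hf : ContDiffOn ℝ (⊤ : ℕ∞) f U) : ContDiffOn ℝ (⊤ : ℕ∞) (pu f) U := by
  have h1 : ContDiffOn ℝ (⊤ : ℕ∞) (fderiv ℝ f) U := hf.fderiv_of_isOpen hU (by simp)
  exact h1.clm_apply contDiffOn_const

lemma contDiffOn_pv' {f : ℝ × ℝ → F} {U : Set (ℝ × ℝ)} (hU : IsOpen U)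
    (hf : ContDiffOn ℝ (⊤ : ℕ∞) f U) : ContDiffOn ℝ (⊤ : ℕ∞) (pv f) U := by
  have h1 : ContDiffOn ℝ (⊤ : ℕ∞) (fderiv ℝ f) U := hf.fderiv_of_isOpen hU (by simp)
  exact h1.clm_apply contDiffOn_const

lemma symm_deriv' {f : ℝ × ℝ → F} {U : Set (ℝ × ℝ)} (hU : IsOpen U)
    (hf : ContDiffOn ℝ (⊤ : ℕ∞) f U) {p : ℝ × ℝ} (hp : p ∈ U) :
    pu (pv f) p = pv (pu f) p := by
  have hct : ContDiffAt ℝ (⊤ : ℕ∞) f p := hf.contDiffAt (hU.mem_nhds hp)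
  have hsym : IsSymmSndFDerivAt ℝ f p := hct.isSymmSndFDerivAt (by simp [minSmoothness_of_isRCLikeNormedField]; exact WithTop.coe_le_coe.2 (le_top : (2:ℕ∞) ≤ ⊤))
  have hd : DifferentiableAt ℝ (fderiv ℝ f) p := by
    have h1 : ContDiffOn ℝ (⊤ : ℕ∞) (fderiv ℝ f) U := hf.fderiv_of_isOpen hU (by simp)
    exact (h1.contDiffAt (hU.mem_nhds hp)).differentiableAt (by norm_cast)
  have h1 : pu (pv f) p = fderiv ℝ (fderiv ℝ f) p (1,0) (0,1) := by
    unfold pu pv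
    rw [fderiv_clm_apply hd (differentiableAt_const _)]
    simp
  have h2 : pv (pu f) p = fderiv ℝ (fderiv ℝ f) p (0,1) (1,0) := by
    unfold pu pv
    rw [fderiv_clm_apply hd (differentiableAt_const _)]
    simp
  rw [h1, h2, hsym]

lemma diffAt_E3 {f : ℝ × ℝ → E3} {x : ℝ × ℝ}
    (h : ∀ j, DifferentiableAt ℝ (fun q => f q j) x) : DifferentiableAt ℝ f x := by
  have heq : f = (EuclideanSpace.equiv (Fin 3) ℝ).symm ∘ (fun q j => f q j) := rfl
  rw [heq]
  exact (EuclideanSpace.equiv (Fin 3) ℝ).symm.differentiableAt.comp x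
    (differentiableAt_pi.2 h)

lemma diffAt_comp_proj {f : ℝ × ℝ → E3} {x : ℝ × ℝ} (hf : DifferentiableAt ℝ f x) (j : Fin 3) :
    DifferentiableAt ℝ (fun q => f q j) x :=
  (EuclideanSpace.proj (𝕜 := ℝ) j).differentiableAt.comp x hf

lemma diffAt_cross {f g : ℝ × ℝ → E3} {x : ℝ × ℝ} (hf : DifferentiableAt ℝ f x)
    (hg : DifferentiableAt ℝ g x) : DifferentiableAt ℝ (fun q => cross (f q) (g q)) x := by
  apply diffAt_E3
  intro j
  have h : ∀ (a b : Fin 3), DifferentiableAt ℝ (fun q => f q a * g q b) x := fun a b =>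
    (diffAt_comp_proj hf a).mul (diffAt_comp_proj hg b)
  fin_cases j
  · exact (h 1 2).sub ((diffAt_comp_proj hf 2).mul (diffAt_comp_proj hg 1))
  · exact (h 2 0).sub ((diffAt_comp_proj hf 0).mul (diffAt_comp_proj hg 2))
  · exact (h 0 1).sub ((diffAt_comp_proj hf 1).mul (diffAt_comp_proj hg 0))

lemma fderiv_zero_of_eqOn_const {U : Set (ℝ × ℝ)} (hU : IsOpen U) {p : ℝ × ℝ} (hp : p ∈ U)
    {f : ℝ × ℝ → ℝ} {c : ℝ} (h : ∀ q ∈ U, f q = c) : fderiv ℝ f p = 0 := by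
  have he : f =ᶠ[nhds p] fun _ => c := Filter.eventuallyEq_of_mem (hU.mem_nhds hp) h
  rw [he.fderiv_eq]
  exact fderiv_const_apply c

/-- `toC` as a continuous linear map. -/
def toCL : E3 →L[ℝ] (Fin 3 → ℂ) :=
  ContinuousLinearMap.pi fun j => Complex.ofRealCLM.comp (EuclideanSpace.proj j)

lemma toCL_eq (x : E3) : toCL x = toC x := rfl

end Aux

set_option maxHeartbeats 1000000

/-- Weingarten / third structure equation:
∂_z n = −H φ_z − (2μ/λ²) φ_z̄. -/
theorem conformal_weingarten_equation
    (U : Set (ℝ × ℝ)) (φ : ℝ × ℝ → E3) (lam : ℝ × ℝ → ℝ)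
    (h : IsConfImm U φ lam) :
    ∀ p ∈ U,
      phiz (nvec φ) p
        = (-(mcurv φ lam p : ℂ)) • phiz φ p
          - (2 * muQ φ p / (lam p : ℂ) ^ 2) • phizbar φ p := by
  obtain ⟨hU, hφ, hlam, hpt⟩ := h
  intro p hp
  have hpuC : ContDiffOn ℝ (⊤ : ℕ∞) (pu φ) U := contDiffOn_pu' hU hφ
  have hpvC : ContDiffOn ℝ (⊤ : ℕ∞) (pv φ) U := contDiffOn_pv' hU hφ
  have hpuD : ∀ q ∈ U, DifferentiableAt ℝ (pu φ) q := fun q hq =>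
    (hpuC.contDiffAt (hU.mem_nhds hq)).differentiableAt (by norm_cast)
  have hpvD : ∀ q ∈ U, DifferentiableAt ℝ (pv φ) q := fun q hq =>
    (hpvC.contDiffAt (hU.mem_nhds hq)).differentiableAt (by norm_cast)
  set c : ℝ × ℝ → E3 := fun q => cross (pu φ q) (pv φ q) with hc
  have hcnorm : ∀ q ∈ U, ‖c q‖ = (lam q) ^ 2 := by
    intro q hq
    obtain ⟨hl, h1, h2, h3⟩ := hpt q hq
    have h4 : ‖c q‖ ^ 2 = ((lam q) ^ 2) ^ 2 := by
      simp only [hc]; rw [cross_norm_sq, h1, h2, h3]; ring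
    have h5 := congrArg Real.sqrt h4
    rwa [Real.sqrt_sq (norm_nonneg _), Real.sqrt_sq (sq_nonneg _)] at h5
  have hlp_ : 0 < lam p := (hpt p hp).1
  have hlp_ne : lam p ≠ 0 := ne_of_gt hlp_
  have hNq : ∀ q ∈ U, nvec φ q = ((lam q) ^ 2)⁻¹ • c q := by
    intro q hq
    have hn : ‖cross (pu φ q) (pv φ q)‖ = (lam q) ^ 2 := hcnorm q hq
    rw [nvec, hn]
  have hNN : ∀ q ∈ U, @inner ℝ _ _ (nvec φ q) (nvec φ q) = (1 : ℝ) := by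
    intro q hq
    have hl := (hpt q hq).1
    rw [hNq q hq, real_inner_smul_left, real_inner_smul_right,
      real_inner_self_eq_norm_sq, hcnorm q hq]
    field_simp
  have hNu : ∀ q ∈ U, @inner ℝ _ _ (nvec φ q) (pu φ q) = (0 : ℝ) := by
    intro q hq
    rw [hNq q hq, real_inner_smul_left]
    have : @inner ℝ _ _ (c q) (pu φ q) = 0 := ip_cross_left _ _
    rw [this, mul_zero]
  have hNv : ∀ q ∈ U, @inner ℝ _ _ (nvec φ q) (pv φ q) = (0 : ℝ) := by
    intro q hq
    rw [hNq q hq, real_inner_smul_left]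
    have : @inner ℝ _ _ (c q) (pv φ q) = 0 := ip_cross_right _ _
    rw [this, mul_zero]
  have hcD : DifferentiableAt ℝ c p := diffAt_cross (hpuD p hp) (hpvD p hp)
  have hcne : c p ≠ 0 := by
    rw [← norm_ne_zero_iff, hcnorm p hp]
    positivity
  have hND : DifferentiableAt ℝ (nvec φ) p := by
    have h1 : DifferentiableAt ℝ (fun q => ‖c q‖) p := hcD.norm ℝ hcne
    have h2 : DifferentiableAt ℝ (fun q => ‖c q‖⁻¹) p :=
      h1.inv (by rw [hcnorm p hp]; positivity)
    exact h2.smul hcD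
  -- second fundamental form coefficients
  set e : ℝ := @inner ℝ _ _ (pu (pu φ) p) (nvec φ p) with he
  set ff : ℝ := @inner ℝ _ _ (pu (pv φ) p) (nvec φ p) with hff
  set gg : ℝ := @inner ℝ _ _ (pv (pv φ) p) (nvec φ p) with hgg
  have hsym : pu (pv φ) p = pv (pu φ) p := symm_deriv' hU hφ hp
  -- inner product relations for A = ∂_u n and B = ∂_v n
  have hAN : @inner ℝ _ _ (pu (nvec φ) p) (nvec φ p) = (0 : ℝ) := by
    have h0 := fderiv_zero_of_eqOn_const hU hp hNN
    have h1 := fderiv_inner_apply (𝕜 := ℝ) hND hND ((1, 0) : ℝ × ℝ)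
    rw [h0] at h1
    simp only [ContinuousLinearMap.zero_apply] at h1
    have h2 : @inner ℝ _ _ (nvec φ p) (fderiv ℝ (nvec φ) p ((1, 0) : ℝ × ℝ))
        = @inner ℝ _ _ (fderiv ℝ (nvec φ) p ((1, 0) : ℝ × ℝ)) (nvec φ p) :=
      real_inner_comm _ _
    rw [h2] at h1
    show @inner ℝ _ _ (fderiv ℝ (nvec φ) p ((1, 0) : ℝ × ℝ)) (nvec φ p) = (0 : ℝ)
    linarith
  have hBN : @inner ℝ _ _ (pv (nvec φ) p) (nvec φ p) = (0 : ℝ) := by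
    have h0 := fderiv_zero_of_eqOn_const hU hp hNN
    have h1 := fderiv_inner_apply (𝕜 := ℝ) hND hND ((0, 1) : ℝ × ℝ)
    rw [h0] at h1
    simp only [ContinuousLinearMap.zero_apply] at h1
    have h2 : @inner ℝ _ _ (nvec φ p) (fderiv ℝ (nvec φ) p ((0, 1) : ℝ × ℝ))
        = @inner ℝ _ _ (fderiv ℝ (nvec φ) p ((0, 1) : ℝ × ℝ)) (nvec φ p) :=
      real_inner_comm _ _
    rw [h2] at h1
    show @inner ℝ _ _ (fderiv ℝ (nvec φ) p ((0, 1) : ℝ × ℝ)) (nvec φ p) = (0 : ℝ)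
    linarith
  have hAu : @inner ℝ _ _ (pu (nvec φ) p) (pu φ p) = -e := by
    have h0 := fderiv_zero_of_eqOn_const hU hp hNu
    have h1 := fderiv_inner_apply (𝕜 := ℝ) hND (hpuD p hp) ((1, 0) : ℝ × ℝ)
    rw [h0] at h1
    simp only [ContinuousLinearMap.zero_apply] at h1
    have h2 : @inner ℝ _ _ (nvec φ p) (fderiv ℝ (pu φ) p ((1, 0) : ℝ × ℝ)) = e := by
      rw [he]; exact real_inner_comm _ _
    rw [h2] at h1
    show @inner ℝ _ _ (fderiv ℝ (nvec φ) p ((1, 0) : ℝ × ℝ)) (pu φ p) = -e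
    linarith
  have hAv : @inner ℝ _ _ (pu (nvec φ) p) (pv φ p) = -ff := by
    have h0 := fderiv_zero_of_eqOn_const hU hp hNv
    have h1 := fderiv_inner_apply (𝕜 := ℝ) hND (hpvD p hp) ((1, 0) : ℝ × ℝ)
    rw [h0] at h1
    simp only [ContinuousLinearMap.zero_apply] at h1
    have h2 : @inner ℝ _ _ (nvec φ p) (fderiv ℝ (pv φ) p ((1, 0) : ℝ × ℝ)) = ff := by
      rw [hff]; exact real_inner_comm _ _
    rw [h2] at h1
    show @inner ℝ _ _ (fderiv ℝ (nvec φ) p ((1, 0) : ℝ × ℝ)) (pv φ p) = -ff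
    linarith
  have hBu : @inner ℝ _ _ (pv (nvec φ) p) (pu φ p) = -ff := by
    have h0 := fderiv_zero_of_eqOn_const hU hp hNu
    have h1 := fderiv_inner_apply (𝕜 := ℝ) hND (hpuD p hp) ((0, 1) : ℝ × ℝ)
    rw [h0] at h1
    simp only [ContinuousLinearMap.zero_apply] at h1
    have h2 : @inner ℝ _ _ (nvec φ p) (fderiv ℝ (pu φ) p ((0, 1) : ℝ × ℝ)) = ff := by
      rw [hff]
      have : fderiv ℝ (pu φ) p ((0, 1) : ℝ × ℝ) = pu (pv φ) p := hsym.symm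
      rw [this]
      exact real_inner_comm _ _
    rw [h2] at h1
    show @inner ℝ _ _ (fderiv ℝ (nvec φ) p ((0, 1) : ℝ × ℝ)) (pu φ p) = -ff
    linarith
  have hBv : @inner ℝ _ _ (pv (nvec φ) p) (pv φ p) = -gg := by
    have h0 := fderiv_zero_of_eqOn_const hU hp hNv
    have h1 := fderiv_inner_apply (𝕜 := ℝ) hND (hpvD p hp) ((0, 1) : ℝ × ℝ)
    rw [h0] at h1
    simp only [ContinuousLinearMap.zero_apply] at h1
    have h2 : @inner ℝ _ _ (nvec φ p) (fderiv ℝ (pv φ) p ((0, 1) : ℝ × ℝ)) = gg := by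
      rw [hgg]; exact real_inner_comm _ _
    rw [h2] at h1
    show @inner ℝ _ _ (fderiv ℝ (nvec φ) p ((0, 1) : ℝ × ℝ)) (pv φ p) = -gg
    linarith
  -- conformality at p
  obtain ⟨-, hip1, hip2, hip3⟩ := hpt p hp
  -- cross at p in terms of the normal
  have hcp : c p = ((lam p) ^ 2) • nvec φ p := by
    rw [hNq p hp, smul_smul]
    rw [mul_inv_cancel₀ (by positivity), one_smul]
  have hAc : ip (pu (nvec φ) p) (cross (pu φ p) (pv φ p)) = 0 := by
    show ip (pu (nvec φ) p) (c p) = 0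
    rw [hcp, ip, real_inner_smul_right, hAN, mul_zero]
  have hBc : ip (pv (nvec φ) p) (cross (pu φ p) (pv φ p)) = 0 := by
    show ip (pv (nvec φ) p) (c p) = 0
    rw [hcp, ip, real_inner_smul_right, hBN, mul_zero]
  -- expansion of A and B
  have hAexp := expand_vec (pu φ p) (pv φ p) (pu (nvec φ) p)
  have hBexp := expand_vec (pu φ p) (pv φ p) (pv (nvec φ) p)
  rw [show ip (pu φ p) (pu φ p) = (lam p)^2 from hip1,
      show ip (pv φ p) (pv φ p) = (lam p)^2 from hip2,
      show ip (pu φ p) (pv φ p) = 0 from hip3,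
      show ip (pu (nvec φ) p) (pu φ p) = -e from hAu,
      show ip (pu (nvec φ) p) (pv φ p) = -ff from hAv,
      hAc] at hAexp
  rw [show ip (pu φ p) (pu φ p) = (lam p)^2 from hip1,
      show ip (pv φ p) (pv φ p) = (lam p)^2 from hip2,
      show ip (pu φ p) (pv φ p) = 0 from hip3,
      show ip (pv (nvec φ) p) (pu φ p) = -ff from hBu,
      show ip (pv (nvec φ) p) (pv φ p) = -gg from hBv,
      hBc] at hBexp
  have hAj : ∀ j, (lam p) ^ 2 * pu (nvec φ) p j
      = -(e * pu φ p j + ff * pv φ p j) := by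
    intro j
    have hraw := congrArg (fun v : E3 => v j) hAexp
    simp only [PiLp.smul_apply, PiLp.add_apply, PiLp.sub_apply, smul_eq_mul] at hraw
    have hl2 : ((lam p) ^ 2 : ℝ) ≠ 0 := by positivity
    apply mul_left_cancel₀ hl2
    ring_nf
    ring_nf at hraw
    linarith
  have hBj : ∀ j, (lam p) ^ 2 * pv (nvec φ) p j
      = -(ff * pu φ p j + gg * pv φ p j) := by
    intro j
    have hraw := congrArg (fun v : E3 => v j) hBexp
    simp only [PiLp.smul_apply, PiLp.add_apply, PiLp.sub_apply, smul_eq_mul] at hraw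
    have hl2 : ((lam p) ^ 2 : ℝ) ≠ 0 := by positivity
    apply mul_left_cancel₀ hl2
    ring_nf
    ring_nf at hraw
    linarith
  -- mean curvature in terms of e, gg
  have hH : mcurv φ lam p = (e + gg) / (2 * (lam p) ^ 2) := by
    rw [mcurv, lap, ip, inner_add_left, ← he, ← hgg]
  -- derivative of phiz φ
  have hd1 := (hpuD p hp).hasFDerivAt
  have hd2 := (hpvD p hp).hasFDerivAt
  have h1 : HasFDerivAt (fun q => toC (pu φ q))
      (toCL.comp (fderiv ℝ (pu φ) p)) p := toCL.hasFDerivAt.comp p hd1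
  have h2 : HasFDerivAt (fun q => toC (pv φ q))
      (toCL.comp (fderiv ℝ (pv φ) p)) p := toCL.hasFDerivAt.comp p hd2
  have h3 : HasFDerivAt (phiz φ)
      ((2 : ℂ)⁻¹ • (toCL.comp (fderiv ℝ (pu φ) p)
        - Complex.I • toCL.comp (fderiv ℝ (pv φ) p))) p :=
    ((h1.sub (h2.const_smul Complex.I)).const_smul ((2 : ℂ)⁻¹))
  have hpuphiz : pu (phiz φ) p
      = (2 : ℂ)⁻¹ • (toC (pu (pu φ) p) - Complex.I • toC (pu (pv φ) p)) := by
    show fderiv ℝ (phiz φ) p (1, 0) = _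
    rw [h3.fderiv]
    simp only [ContinuousLinearMap.smul_apply, ContinuousLinearMap.sub_apply,
      ContinuousLinearMap.comp_apply, ← toCL_eq]
    rfl
  have hpvphiz : pv (phiz φ) p
      = (2 : ℂ)⁻¹ • (toC (pv (pu φ) p) - Complex.I • toC (pv (pv φ) p)) := by
    show fderiv ℝ (phiz φ) p (0, 1) = _
    rw [h3.fderiv]
    simp only [ContinuousLinearMap.smul_apply, ContinuousLinearMap.sub_apply,
      ContinuousLinearMap.comp_apply, ← toCL_eq]
    rfl
  -- the value of μ
  have hμ : muQ φ p = (((e - gg) / 4 : ℝ) : ℂ) - (((ff / 2 : ℝ)) : ℂ) * Complex.I := by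
    rw [muQ, dz, hpuphiz, hpvphiz, hsym]
    have he' : e = pu (pu φ) p 0 * nvec φ p 0 + pu (pu φ) p 1 * nvec φ p 1
        + pu (pu φ) p 2 * nvec φ p 2 := by rw [he, ← ip]; exact ip_eq' _ _
    have hff' : ff = pv (pu φ) p 0 * nvec φ p 0 + pv (pu φ) p 1 * nvec φ p 1
        + pv (pu φ) p 2 * nvec φ p 2 := by rw [hff, hsym, ← ip]; exact ip_eq' _ _
    have hgg' : gg = pv (pv φ) p 0 * nvec φ p 0 + pv (pv φ) p 1 * nvec φ p 1
        + pv (pv φ) p 2 * nvec φ p 2 := by rw [hgg, ← ip]; exact ip_eq' _ _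
    simp only [cdot, Fin.sum_univ_three, toC, Pi.smul_apply, Pi.sub_apply,
      smul_eq_mul]
    rw [he', hff', hgg']
    push_cast
    ring_nf
    simp only [Complex.I_sq]
    ring
  -- final componentwise computation
  funext j
  have hlC : ((lam p : ℝ) : ℂ) ≠ 0 := by exact_mod_cast hlp_ne
  have hl2C : ((lam p : ℝ) : ℂ) ^ 2 ≠ 0 := pow_ne_zero 2 hlC
  have hAjC : ((pu (nvec φ) p j : ℝ) : ℂ)
      = -(((e : ℝ) : ℂ) * ((pu φ p j : ℝ) : ℂ) + ((ff : ℝ) : ℂ) * ((pv φ p j : ℝ) : ℂ))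
        / ((lam p : ℝ) : ℂ) ^ 2 := by
    rw [eq_div_iff hl2C]
    have h := congrArg (Complex.ofReal) (hAj j)
    push_cast at h
    linear_combination h
  have hBjC : ((pv (nvec φ) p j : ℝ) : ℂ)
      = -(((ff : ℝ) : ℂ) * ((pu φ p j : ℝ) : ℂ) + ((gg : ℝ) : ℂ) * ((pv φ p j : ℝ) : ℂ))
        / ((lam p : ℝ) : ℂ) ^ 2 := by
    rw [eq_div_iff hl2C]
    have h := congrArg (Complex.ofReal) (hBj j)
    push_cast at h
    linear_combination h
  simp only [phiz, phizbar, toC, Pi.smul_apply, Pi.sub_apply, Pi.add_apply,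
    smul_eq_mul, hμ, hH]
  rw [hAjC, hBjC]
  push_cast
  field_simp
  ring_nf
  simp only [Complex.I_sq]
  ring
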